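/- In the Ko-Lee variant protocol with u₂ = b₁wb₂ (b₁, b₂ ∈ B_s = PL₂([φ_s,1]), w ∈ PL₂([0,1]) with w(φ_s) ≤ φ_s): if b₀ ∈ B_s satisfies b₀⁻¹(w⁻¹(φ_s)) = u₂⁻¹(φ_s), and we set b₂' = b₂b₀⁻¹ and u₂' = b₁wb₂', then b₂'(w⁻¹(φ_s)) = w⁻¹(φ_s) and b₂'(t) = w⁻¹(u₂'(t)) for all t ∈ [0, w⁻¹(φ_s)]. -/

import Mathlib

/-- The standard generator `x₀` of `PL₂([0,1])`, extended by the identity outside `[0,1]`. -/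
noncomputable def x0fun (t : ℝ) : ℝ :=
  if t < 0 then t
  else if t ≤ 1/2 then t/2
  else if t ≤ 3/4 then t - 1/4
  else if t ≤ 1 then 2*t - 1
  else t

/-- The generator `x_k`: the identity on `[0, 1 - 2⁻ᵏ]` and a shrunken copy of `x₀`
on `[1 - 2⁻ᵏ, 1]`. -/
noncomputable def xkfun (k : ℕ) (t : ℝ) : ℝ :=
  if t ≤ 1 - (2:ℝ)^(-(k:ℤ)) then t
  else if t ≤ 1 then
    (1 - (2:ℝ)^(-(k:ℤ))) + (2:ℝ)^(-(k:ℤ)) * x0fun ((2:ℝ)^(k:ℤ) * (t - (1 - (2:ℝ)^(-(k:ℤ)))))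
  else t

/-- A dyadic rational real number. -/
def IsDyadic (t : ℝ) : Prop := ∃ a : ℤ, ∃ n : ℕ, t = (a : ℝ) / 2 ^ n

/-- Membership in `PL₂([0,1])`: a permutation of `ℝ` that is continuous, strictly
increasing, the identity outside `[0,1]`, and piecewise linear with finitely many
breakpoints, all breakpoints dyadic and all slopes integer powers of `2`. -/
def IsPL2 (f : Equiv.Perm ℝ) : Prop :=
  Continuous ⇑f ∧ StrictMono ⇑f ∧ (∀ t : ℝ, t ≤ 0 ∨ 1 ≤ t → f t = t) ∧
  ∃ P : Finset ℝ, (∀ p ∈ P, IsDyadic p) ∧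
    ∀ x : ℝ, x ∉ P → ∃ n : ℤ, ∀ᶠ t in nhds x, f t = f x + 2 ^ n * (t - x)

/-- The subgroup `PL₂([0,d])` of elements of `PL₂([0,1])` that are the identity on `[d,1]`. -/
def PL2below (d : ℝ) : Set (Equiv.Perm ℝ) := {f | IsPL2 f ∧ ∀ t : ℝ, d ≤ t → f t = t}

/-- The subgroup `PL₂([d,1])` of elements of `PL₂([0,1])` that are the identity on `[0,d]`. -/
def PL2above (d : ℝ) : Set (Equiv.Perm ℝ) := {f | IsPL2 f ∧ ∀ t : ℝ, t ≤ d → f t = t}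

/-- Attack on the Ko–Lee variant protocol: with `u₂ = b₁ w b₂` where `b₁, b₂ ∈ B_s =
PL₂([φ_s,1])` and `w(φ_s) ≤ φ_s`, if `b₀ ∈ B_s` satisfies `b₀⁻¹(w⁻¹(φ_s)) = u₂⁻¹(φ_s)`,
then `b₂' := b₂ b₀⁻¹` fixes `w⁻¹(φ_s)` and is given by `w⁻¹ ∘ u₂'` on `[0, w⁻¹(φ_s)]`,
where `u₂' = b₁ w b₂'`. -/
theorem kolee_variant_attack (s : ℕ) (hs : 1 ≤ s)
    (w b₁ b₂ b₀ : Equiv.Perm ℝ)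
    (hw : IsPL2 w) (hwφ : w (1 - (2:ℝ)^(-(s:ℤ)-1)) ≤ 1 - (2:ℝ)^(-(s:ℤ)-1))
    (hb₁ : b₁ ∈ PL2above (1 - (2:ℝ)^(-(s:ℤ)-1)))
    (hb₂ : b₂ ∈ PL2above (1 - (2:ℝ)^(-(s:ℤ)-1)))
    (hb₀ : b₀ ∈ PL2above (1 - (2:ℝ)^(-(s:ℤ)-1)))
    (hb₀eq : b₀⁻¹ (w⁻¹ (1 - (2:ℝ)^(-(s:ℤ)-1))) = (b₁ * w * b₂)⁻¹ (1 - (2:ℝ)^(-(s:ℤ)-1))) :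
    (b₂ * b₀⁻¹) (w⁻¹ (1 - (2:ℝ)^(-(s:ℤ)-1))) = w⁻¹ (1 - (2:ℝ)^(-(s:ℤ)-1)) ∧
    ∀ t ∈ Set.Icc (0:ℝ) (w⁻¹ (1 - (2:ℝ)^(-(s:ℤ)-1))),
      (b₂ * b₀⁻¹) t = w⁻¹ ((b₁ * w * (b₂ * b₀⁻¹)) t) := by
  set φ : ℝ := 1 - (2:ℝ)^(-(s:ℤ)-1) with hφ
  have hb₁φ : b₁ φ = φ := hb₁.2 φ le_rfl
  have hb₁invφ : b₁⁻¹ φ = φ := by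
    conv_lhs => rw [← hb₁φ]
    simp
  have key : b₀⁻¹ (w⁻¹ φ) = b₂⁻¹ (w⁻¹ φ) := by
    rw [hb₀eq]
    simp [mul_inv_rev, Equiv.Perm.mul_apply, hb₁invφ]
  have hfix : (b₂ * b₀⁻¹) (w⁻¹ φ) = w⁻¹ φ := by
    rw [Equiv.Perm.mul_apply, key]
    simp
  refine ⟨hfix, ?_⟩
  intro t ht
  have hsm₀ : StrictMono ⇑b₀ := hb₀.1.2.1
  have hsm₂ : StrictMono ⇑b₂ := hb₂.1.2.1
  have hmono : ∀ a b : ℝ, a ≤ b → (b₂ * b₀⁻¹) a ≤ (b₂ * b₀⁻¹) b := by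
    intro a b hab
    have h1 : b₀⁻¹ a ≤ b₀⁻¹ b := by
      rw [← hsm₀.le_iff_le]
      simpa using hab
    simpa [Equiv.Perm.mul_apply] using hsm₂.monotone h1
  have hle : (b₂ * b₀⁻¹) t ≤ w⁻¹ φ := by
    calc (b₂ * b₀⁻¹) t ≤ (b₂ * b₀⁻¹) (w⁻¹ φ) := hmono _ _ ht.2
    _ = w⁻¹ φ := hfix
  have hwle : w ((b₂ * b₀⁻¹) t) ≤ φ := by
    have h2 : w ((b₂ * b₀⁻¹) t) ≤ w (w⁻¹ φ) := hw.2.1.monotone hle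
    simpa using h2
  have hb₁id : b₁ (w ((b₂ * b₀⁻¹) t)) = w ((b₂ * b₀⁻¹) t) := hb₁.2 _ hwle
  simp only [Equiv.Perm.mul_apply] at hb₁id ⊢
  rw [hb₁id]
  simp
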